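/- Let 0 < λ₁ ≤ … ≤ λ_m < 1 be reals, let ã₁ > ã₂ > … > ã_p > 1 be reals, and let d̃₁, …, d̃_p be positive integers. Suppose Σ_{k=1}^p ã_k d̃_k ≤ Σ_{i=1}^m λ_i. Define κ = min over 1 ≤ j ≤ m of (Σ_{k=1}^p ã_k d̃_k + Σ_{i=1}^j (λ_j - λ_i)) / λ_j and over 1 ≤ l ≤ p of Σ_{j=1}^l (ã_j/ã_l) d̃_j + Σ_{j=l+1}^p d̃_j + Σ_{i=1}^m (1 - λ_i/ã_l). Then κ = min{ (Σ_{k=1}^p ã_k d̃_k + Σ_{i=1}^j (λ_j - λ_i)) / λ_j : 1 ≤ j ≤ m }. -/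

import Mathlib

theorem stmt9 (m p : ℕ) (hm : 1 ≤ m) (hp : 1 ≤ p)
    (lam : ℕ → ℝ) (ta : ℕ → ℝ) (td : ℕ → ℕ)
    (hlampos : ∀ i, 1 ≤ i → i ≤ m → 0 < lam i)
    (hlamlt1 : ∀ i, 1 ≤ i → i ≤ m → lam i < 1)
    (hlammono : ∀ i j, 1 ≤ i → i ≤ j → j ≤ m → lam i ≤ lam j)
    (htagt1 : ∀ k, 1 ≤ k → k ≤ p → 1 < ta k)
    (htadec : ∀ k l, 1 ≤ k → k < l → l ≤ p → ta l < ta k)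
    (htdpos : ∀ k, 1 ≤ k → k ≤ p → 0 < td k)
    (hsum : ∑ k ∈ Finset.Icc 1 p, ta k * (td k : ℝ) ≤ ∑ i ∈ Finset.Icc 1 m, lam i)
    (hnem : (Finset.Icc 1 m).Nonempty) (hnep : (Finset.Icc 1 p).Nonempty)
    (κ : ℝ)
    (hκ : κ = min
        ((Finset.Icc 1 m).inf' hnem (fun j =>
          ((∑ k ∈ Finset.Icc 1 p, ta k * (td k : ℝ))
            + ∑ i ∈ Finset.Icc 1 j, (lam j - lam i)) / lam j))
        ((Finset.Icc 1 p).inf' hnep (fun l =>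
          (∑ j ∈ Finset.Icc 1 l, (ta j / ta l) * (td j : ℝ))
            + (∑ j ∈ Finset.Icc (l + 1) p, (td j : ℝ))
            + ∑ i ∈ Finset.Icc 1 m, (1 - lam i / ta l)))) :
    κ = (Finset.Icc 1 m).inf' hnem (fun j =>
          ((∑ k ∈ Finset.Icc 1 p, ta k * (td k : ℝ))
            + ∑ i ∈ Finset.Icc 1 j, (lam j - lam i)) / lam j) := by
  rw [hκ, min_eq_left]
  apply Finset.le_inf'
  intro l hl
  rw [Finset.mem_Icc] at hl
  obtain ⟨hl1, hlp⟩ := hl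
  have hmmem : m ∈ Finset.Icc 1 m := Finset.mem_Icc.mpr ⟨hm, le_rfl⟩
  refine le_trans (Finset.inf'_le _ hmmem) ?_
  set S := ∑ k ∈ Finset.Icc 1 p, ta k * (td k : ℝ) with hSdef
  set L := ∑ i ∈ Finset.Icc 1 m, lam i with hLdef
  have hlmpos : 0 < lam m := hlampos m hm le_rfl
  have hlmlt1 : lam m < 1 := hlamlt1 m hm le_rfl
  have hta : 1 < ta l := htagt1 l hl1 hlp
  have htapos : 0 < ta l := lt_trans one_pos hta
  have htane : ta l ≠ 0 := ne_of_gt htapos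
  -- the j = m term of the first inf
  have hsum1 : ∑ i ∈ Finset.Icc 1 m, (lam m - lam i) = (m : ℝ) * lam m - L := by
    rw [Finset.sum_sub_distrib, Finset.sum_const, Nat.card_Icc]
    simp [nsmul_eq_mul, hLdef]
  -- split S at l
  have hsplit : S = (∑ j ∈ Finset.Icc 1 l, ta j * (td j : ℝ))
      + ∑ j ∈ Finset.Icc (l + 1) p, ta j * (td j : ℝ) := by
    rw [hSdef, show Finset.Icc 1 p = Finset.Ioc 0 p from rfl,
      show Finset.Icc 1 l = Finset.Ioc 0 l from rfl,
      Finset.Icc_add_one_left_eq_Ioc,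
      Finset.sum_Ioc_consecutive _ (Nat.zero_le l) hlp]
  -- tail estimate
  have htail : ∑ j ∈ Finset.Icc (l + 1) p, ta j * (td j : ℝ)
      ≤ ta l * ∑ j ∈ Finset.Icc (l + 1) p, (td j : ℝ) := by
    rw [Finset.mul_sum]
    apply Finset.sum_le_sum
    intro j hj
    rw [Finset.mem_Icc] at hj
    have : ta j < ta l := htadec l j hl1 hj.1 hj.2
    have : (0 : ℝ) ≤ (td j : ℝ) := Nat.cast_nonneg _
    nlinarith
  -- head identity
  have hhead : (∑ j ∈ Finset.Icc 1 l, (ta j / ta l) * (td j : ℝ)) * ta l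
      = ∑ j ∈ Finset.Icc 1 l, ta j * (td j : ℝ) := by
    rw [Finset.sum_mul]
    apply Finset.sum_congr rfl
    intro j _
    field_simp
  -- last sum identity
  have hlast : (∑ i ∈ Finset.Icc 1 m, (1 - lam i / ta l)) * ta l
      = (m : ℝ) * ta l - L := by
    rw [Finset.sum_mul, hLdef]
    rw [show (m : ℝ) * ta l - ∑ i ∈ Finset.Icc 1 m, lam i
        = ∑ i ∈ Finset.Icc 1 m, (ta l - lam i) by
      rw [Finset.sum_sub_distrib, Finset.sum_const, Nat.card_Icc]
      simp [nsmul_eq_mul]]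
    apply Finset.sum_congr rfl
    intro i _
    field_simp
  set f : ℝ := (∑ j ∈ Finset.Icc 1 l, (ta j / ta l) * (td j : ℝ))
      + (∑ j ∈ Finset.Icc (l + 1) p, (td j : ℝ))
      + ∑ i ∈ Finset.Icc 1 m, (1 - lam i / ta l) with hfdef
  have hkey : S + (m : ℝ) * ta l - L ≤ f * ta l := by
    have : f * ta l = (∑ j ∈ Finset.Icc 1 l, ta j * (td j : ℝ))
        + (∑ j ∈ Finset.Icc (l + 1) p, (td j : ℝ)) * ta l
        + ((m : ℝ) * ta l - L) := by
      rw [hfdef]; rw [add_mul, add_mul, hhead, hlast]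
    rw [this, hsplit]
    have := htail
    nlinarith
  rw [hsum1, div_le_iff₀ hlmpos]
  have hSL : S ≤ L := hsum
  nlinarith [mul_nonneg (le_of_lt hlmpos) (sub_nonneg.mpr hkey),
    mul_nonneg (sub_nonneg.mpr (le_of_lt (lt_trans hlmlt1 hta))) (sub_nonneg.mpr hSL),
    htapos]
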